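/- Rules (5) and (6) are inverses: if S is a face sequence of type 5 and S′ is the result of applying rule (5) to S, then S′ is a face sequence of type 6 and applying rule (6) to S′ returns S; conversely, if T is a face sequence of type 6 and T′ is the result of applying rule (6) to T, then T′ is of type 5 and applying rule (5) to T′ returns T. -/
import Mathlib


set_option linter.unusedVariables false

/-- The alphabet `{0, 1, ∗}` for face sequences. -/
inductive Letter : Type
  | zero
  | one
  | star
  deriving DecidableEq

/-- A sequence of length `n` over the alphabet `{0, 1, ∗}`. -/
abbrev FSeq (n : ℕ) := Fin n → Letter

/-- `S(1)`, the number of `1`'s in `S`. -/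
def count1 {n : ℕ} (S : FSeq n) : ℕ := (Finset.univ.filter fun i => S i = Letter.one).card

/-- `S(0)`, the number of `0`'s in `S`. -/
def count0 {n : ℕ} (S : FSeq n) : ℕ := (Finset.univ.filter fun i => S i = Letter.zero).card

/-- The number of `∗`'s in `S`. -/
def countStar {n : ℕ} (S : FSeq n) : ℕ := (Finset.univ.filter fun i => S i = Letter.star).card

/-- A face sequence: either no `∗` and exactly `k` ones, or at most `k-1` ones and
(#ones) + (#stars) ≥ `k+1`. -/
def FaceSeq {n : ℕ} (k : ℕ) (S : FSeq n) : Prop :=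
  (countStar S = 0 ∧ count1 S = k) ∨ (count1 S + 1 ≤ k ∧ k + 1 ≤ count1 S + countStar S)

/-- `v₀`, the sequence of `k` ones followed by `n - k` zeros. -/
def v0seq (n k : ℕ) : FSeq n := fun i => if (i : ℕ) < k then Letter.one else Letter.zero

/-- `S` contains at least one `∗`. -/
def hasStar {n : ℕ} (S : FSeq n) : Prop := ∃ i, S i = Letter.star

/-- There is a `1` to the right of the rightmost `∗` (in particular `S` contains a `∗`). -/
def OneRight {n : ℕ} (S : FSeq n) : Prop :=
  hasStar S ∧ ∃ i, S i = Letter.one ∧ ∀ j, i < j → S j ≠ Letter.star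

/-- There is no `1` to the right of the rightmost `∗` (and `S` contains a `∗`). -/
def NoOneRight {n : ℕ} (S : FSeq n) : Prop :=
  hasStar S ∧ ∀ i, S i = Letter.one → ∃ j, i < j ∧ S j = Letter.star

/-- There is a `0` to the left of the leftmost `∗` (in particular `S` contains a `∗`). -/
def ZeroLeft {n : ℕ} (S : FSeq n) : Prop :=
  hasStar S ∧ ∃ i, S i = Letter.zero ∧ ∀ j, j < i → S j ≠ Letter.star

/-- There is no `0` to the left of the leftmost `∗` (and `S` contains a `∗`). -/
def NoZeroLeft {n : ℕ} (S : FSeq n) : Prop :=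
  hasStar S ∧ ∀ i, S i = Letter.zero → ∃ j, j < i ∧ S j = Letter.star

/-- `i` is the position of the rightmost `1` of `S`. -/
def IsRightmostOne {n : ℕ} (S : FSeq n) (i : Fin n) : Prop :=
  S i = Letter.one ∧ ∀ j, i < j → S j ≠ Letter.one

/-- `i` is the position of the rightmost `∗` of `S`. -/
def IsRightmostStar {n : ℕ} (S : FSeq n) (i : Fin n) : Prop :=
  S i = Letter.star ∧ ∀ j, i < j → S j ≠ Letter.star

/-- `i` is the position of the leftmost `0` of `S`. -/
def IsLeftmostZero {n : ℕ} (S : FSeq n) (i : Fin n) : Prop :=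
  S i = Letter.zero ∧ ∀ j, j < i → S j ≠ Letter.zero

/-- `i` is the position of the leftmost `∗` of `S`. -/
def IsLeftmostStar {n : ℕ} (S : FSeq n) (i : Fin n) : Prop :=
  S i = Letter.star ∧ ∀ j, j < i → S j ≠ Letter.star

/-- Condition of rule (1), subcondition (a). -/
def Cond1a {n : ℕ} (k m0 m1 : ℕ) (S : FSeq n) : Prop :=
  count1 S + 1 ≤ k ∧ OneRight S ∧ count1 S ≠ m1

/-- Condition of rule (1), subcondition (b). -/
def Cond1b {n : ℕ} (k m0 m1 : ℕ) (S : FSeq n) : Prop :=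
  count1 S + 1 ≤ k ∧ OneRight S ∧ count1 S = m1 ∧ m0 < count0 S

/-- Condition of rule (1), subcondition (c): no `0` to the left of the leftmost `∗`. -/
def Cond1c {n : ℕ} (k m0 m1 : ℕ) (S : FSeq n) : Prop :=
  count1 S + 1 ≤ k ∧ OneRight S ∧ count1 S = m1 ∧ count0 S = m0 ∧ NoZeroLeft S

/-- Condition of rule (2), subcondition (a): here `count1 S + 1 ≠ m1` encodes `S(1) ≠ m₁ - 1`. -/
def Cond2a {n : ℕ} (k m0 m1 : ℕ) (S : FSeq n) : Prop :=
  count1 S + 2 ≤ k ∧ NoOneRight S ∧ count1 S + 1 ≠ m1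

/-- Condition of rule (2), subcondition (b). -/
def Cond2b {n : ℕ} (k m0 m1 : ℕ) (S : FSeq n) : Prop :=
  count1 S + 2 ≤ k ∧ NoOneRight S ∧ count1 S + 1 = m1 ∧ m0 < count0 S

/-- Condition of rule (2), subcondition (c). -/
def Cond2c {n : ℕ} (k m0 m1 : ℕ) (S : FSeq n) : Prop :=
  count1 S + 2 ≤ k ∧ NoOneRight S ∧ count1 S + 1 = m1 ∧ count0 S = m0 ∧ NoZeroLeft S

/-- `S` is of type 1 (satisfies the condition of rule (1)). -/
def Type1 {n : ℕ} (k m0 m1 : ℕ) (S : FSeq n) : Prop :=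
  Cond1a k m0 m1 S ∨ Cond1b k m0 m1 S ∨ Cond1c k m0 m1 S

/-- `S` is of type 2 (satisfies the condition of rule (2)). -/
def Type2 {n : ℕ} (k m0 m1 : ℕ) (S : FSeq n) : Prop :=
  Cond2a k m0 m1 S ∨ Cond2b k m0 m1 S ∨ Cond2c k m0 m1 S

/-- `S` is of type 3: `S(1) = k-1`, `S(0) ≤ n-k-1`, no `1` right of the rightmost `∗`,
a `0` left of the leftmost `∗`. -/
def Type3 {n : ℕ} (k : ℕ) (S : FSeq n) : Prop :=
  count1 S + 1 = k ∧ count0 S + k + 1 ≤ n ∧ NoOneRight S ∧ ZeroLeft S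

/-- `S` is of type 4: `S(1) = k-1`, `S(0) ≤ n-k-2`, no `1` right of the rightmost `∗`,
no `0` left of the leftmost `∗`. -/
def Type4 {n : ℕ} (k : ℕ) (S : FSeq n) : Prop :=
  count1 S + 1 = k ∧ count0 S + k + 2 ≤ n ∧ NoOneRight S ∧ NoZeroLeft S

/-- `S` is of type 5: `S(1) = m₁`, `S(0) ≤ m₀`, a `1` right of the rightmost `∗`,
a `0` left of the leftmost `∗`. -/
def Type5 {n : ℕ} (m0 m1 : ℕ) (S : FSeq n) : Prop :=
  count1 S = m1 ∧ count0 S ≤ m0 ∧ OneRight S ∧ ZeroLeft S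

/-- `S` is of type 6: `S(1) = m₁`, `S(0) < m₀`, a `1` right of the rightmost `∗`,
no `0` left of the leftmost `∗`. -/
def Type6 {n : ℕ} (m0 m1 : ℕ) (S : FSeq n) : Prop :=
  count1 S = m1 ∧ count0 S < m0 ∧ OneRight S ∧ NoZeroLeft S

/-- `S` is of type 7: `S(1) = m₁-1`, `S(0) ≤ m₀`, no `1` right of the rightmost `∗`,
a `0` left of the leftmost `∗`. -/
def Type7 {n : ℕ} (m0 m1 : ℕ) (S : FSeq n) : Prop :=
  count1 S + 1 = m1 ∧ count0 S ≤ m0 ∧ NoOneRight S ∧ ZeroLeft S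

/-- `S` is of type 8: `S(1) = m₁-1`, `S(0) < m₀`, no `1` right of the rightmost `∗`,
no `0` left of the leftmost `∗`. -/
def Type8 {n : ℕ} (m0 m1 : ℕ) (S : FSeq n) : Prop :=
  count1 S + 1 = m1 ∧ count0 S < m0 ∧ NoOneRight S ∧ NoZeroLeft S

/-- `S` is of type 9: `S(1) = k`, `S(0) = n-k`, and `S ≠ v₀`. -/
def Type9 {n : ℕ} (k : ℕ) (S : FSeq n) : Prop :=
  count1 S = k ∧ count0 S + k = n ∧ S ≠ v0seq n k

/-- `S` is of type 10: `S(1) = k-1`, `S(0) = n-k-1`, no `1` right of the rightmost `∗`,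
no `0` left of the leftmost `∗`. -/
def Type10 {n : ℕ} (k : ℕ) (S : FSeq n) : Prop :=
  count1 S + 1 = k ∧ count0 S + k + 1 = n ∧ NoOneRight S ∧ NoZeroLeft S

/-- `S` is of type `i` for `1 ≤ i ≤ 10` (and of no type otherwise). -/
def OfType {n : ℕ} (k m0 m1 : ℕ) (i : ℕ) (S : FSeq n) : Prop :=
  match i with
  | 1 => Type1 k m0 m1 S
  | 2 => Type2 k m0 m1 S
  | 3 => Type3 k S
  | 4 => Type4 k S
  | 5 => Type5 m0 m1 S
  | 6 => Type6 m0 m1 S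
  | 7 => Type7 m0 m1 S
  | 8 => Type8 m0 m1 S
  | 9 => Type9 k S
  | 10 => Type10 k S
  | _ => False

/-- The replacement of rule (1): replace the rightmost `1` with `∗`. -/
def Apply1 {n : ℕ} (S S' : FSeq n) : Prop :=
  ∃ i, IsRightmostOne S i ∧ S' = Function.update S i Letter.star

/-- The replacement of rule (2): replace the rightmost `∗` with `1`. -/
def Apply2 {n : ℕ} (S S' : FSeq n) : Prop :=
  ∃ i, IsRightmostStar S i ∧ S' = Function.update S i Letter.one

/-- The replacement of rules (3), (5) and (7): replace the leftmost `0` with `∗`. -/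
def Apply3 {n : ℕ} (S S' : FSeq n) : Prop :=
  ∃ i, IsLeftmostZero S i ∧ S' = Function.update S i Letter.star

/-- The replacement of rules (4), (6) and (8): replace the leftmost `∗` with `0`. -/
def Apply4 {n : ℕ} (S S' : FSeq n) : Prop :=
  ∃ i, IsLeftmostStar S i ∧ S' = Function.update S i Letter.zero

/-- The replacement of rule (9): replace the leftmost `0` and the rightmost `1` each with `∗`. -/
def Apply9 {n : ℕ} (S S' : FSeq n) : Prop :=
  ∃ i j, IsLeftmostZero S i ∧ IsRightmostOne S j ∧
    S' = Function.update (Function.update S i Letter.star) j Letter.star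

/-- The replacement of rule (10): replace the leftmost `∗` with `0` and the other `∗` with `1`. -/
def Apply10 {n : ℕ} (S S' : FSeq n) : Prop :=
  ∃ i j, IsLeftmostStar S i ∧ IsRightmostStar S j ∧ i ≠ j ∧
    S' = Function.update (Function.update S i Letter.zero) j Letter.one

/-- The matching `V` on face sequences: a face sequence `S` of type 1, 3, 5, 7 or 9 is
matched with the result `S'` of applying the corresponding rule to it. -/
def Vmatch {n : ℕ} (k m0 m1 : ℕ) (S S' : FSeq n) : Prop :=
  FaceSeq k S ∧
    ((Type1 k m0 m1 S ∧ Apply1 S S') ∨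
     (Type3 k S ∧ Apply3 S S') ∨
     (Type5 m0 m1 S ∧ Apply3 S S') ∨
     (Type7 m0 m1 S ∧ Apply3 S S') ∨
     (Type9 k S ∧ Apply9 S S'))

/-- The vertex set of a face sequence `S`: the vertex sequences (0/1-sequences with
exactly `k` ones) agreeing with `S` wherever `S` is not `∗`. -/
def VertexSet {n : ℕ} (k : ℕ) (S : FSeq n) : Set (FSeq n) :=
  {v | (∀ i, v i ≠ Letter.star) ∧ count1 v = k ∧ ∀ i, S i ≠ Letter.star → v i = S i}

/-- The dimension of the face `F(S)`. -/
def fdim {n : ℕ} (S : FSeq n) : ℕ :=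
  if countStar S = 0 then 0 else countStar S - 1

/-- `T` is a codimension-1 face of `S`. -/
def Codim1 {n : ℕ} (k : ℕ) (T S : FSeq n) : Prop :=
  VertexSet k T ⊂ VertexSet k S ∧ fdim T + 1 = fdim S

/-- A (nontrivial) `V`-path `a₀, b₀, a₁, b₁, …, b_r, a_{r+1}` of face sequences. -/
structure VPath (n k m0 m1 r : ℕ) where
  a : Fin (r + 2) → FSeq n
  b : Fin (r + 1) → FSeq n
  face_a : ∀ i, FaceSeq k (a i)
  face_b : ∀ i, FaceSeq k (b i)
  mem : ∀ i : Fin (r + 1), Vmatch k m0 m1 (a i.castSucc) (b i)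
  codim_left : ∀ i : Fin (r + 1), Codim1 k (a i.castSucc) (b i)
  codim_right : ∀ i : Fin (r + 1), Codim1 k (a i.succ) (b i)
  step_ne : ∀ i : Fin (r + 1), a i.castSucc ≠ a i.succ

section Helpers

lemma cnt_update {n : ℕ} (S : FSeq n) (i : Fin n) (b L : Letter) :
    (Finset.univ.filter fun j => Function.update S i b j = L).card
      + (if S i = L then 1 else 0)
    = (Finset.univ.filter fun j => S j = L).card + (if b = L then 1 else 0) := by
  classical
  rw [Finset.card_filter, Finset.card_filter]
  have h : (fun j => if Function.update S i b j = L then (1:ℕ) else 0)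
      = Function.update (fun j => if S j = L then (1:ℕ) else 0) i
          (if b = L then 1 else 0) := by
    funext j
    by_cases hj : j = i
    · subst hj; simp
    · simp [Function.update_of_ne hj]
  rw [h, Finset.sum_update_of_mem (Finset.mem_univ i),
    ← Finset.sum_erase_add Finset.univ _ (Finset.mem_univ i),
    Finset.sdiff_singleton_eq_erase]
  ring

lemma count1_update {n : ℕ} (S : FSeq n) (i : Fin n) (b : Letter) :
    count1 (Function.update S i b) + (if S i = Letter.one then 1 else 0)
      = count1 S + (if b = Letter.one then 1 else 0) :=
  cnt_update S i b Letter.one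

lemma count0_update {n : ℕ} (S : FSeq n) (i : Fin n) (b : Letter) :
    count0 (Function.update S i b) + (if S i = Letter.zero then 1 else 0)
      = count0 S + (if b = Letter.zero then 1 else 0) :=
  cnt_update S i b Letter.zero

lemma countStar_update {n : ℕ} (S : FSeq n) (i : Fin n) (b : Letter) :
    countStar (Function.update S i b) + (if S i = Letter.star then 1 else 0)
      = countStar S + (if b = Letter.star then 1 else 0) :=
  cnt_update S i b Letter.star

lemma cnt_total {n : ℕ} (S : FSeq n) :
    count0 S + count1 S + countStar S = n := by
  classical
  unfold count0 count1 countStar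
  rw [Finset.card_filter, Finset.card_filter, Finset.card_filter,
    ← Finset.sum_add_distrib, ← Finset.sum_add_distrib]
  have h : ∀ j ∈ Finset.univ, ((if S j = Letter.zero then (1:ℕ) else 0)
      + (if S j = Letter.one then 1 else 0))
      + (if S j = Letter.star then 1 else 0) = 1 := by
    intro j _
    cases h : S j <;> simp [h]
  rw [Finset.sum_congr rfl h]
  simp

lemma one_le_countStar {n : ℕ} {S : FSeq n} (h : hasStar S) : 1 ≤ countStar S := by
  obtain ⟨j, hj⟩ := h
  exact Finset.card_pos.mpr ⟨j, Finset.mem_filter.mpr ⟨Finset.mem_univ _, hj⟩⟩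

lemma hasStar_of_countStar {n : ℕ} {S : FSeq n} (h : 1 ≤ countStar S) : hasStar S := by
  obtain ⟨j, hj⟩ := Finset.card_pos.mp h
  exact ⟨j, (Finset.mem_filter.mp hj).2⟩

end Helpers

/-- **Rules (5) and (6) are inverses of each other.** -/
theorem rule5_rule6_inverse (n k m0 m1 : ℕ) (hk1 : 1 ≤ k) (hk2 : k ≤ n - 1)
    (hm0 : m0 + k + 1 ≤ n) (hm1l : 1 ≤ m1) (hm1u : m1 + 1 ≤ k) :
    (∀ S S' : FSeq n, FaceSeq k S → Type5 m0 m1 S → Apply3 S S' →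
      FaceSeq k S' ∧ Type6 m0 m1 S' ∧ Apply4 S' S) ∧
    (∀ T T' : FSeq n, FaceSeq k T → Type6 m0 m1 T → Apply4 T T' →
      FaceSeq k T' ∧ Type5 m0 m1 T' ∧ Apply3 T' T) := by
  constructor
  · rintro S S' hFS ⟨h1, h0, ⟨hs, p, hp1, hpr⟩, ⟨-, z, hz0, hzl⟩⟩ ⟨i, ⟨hi0, hileft⟩, rfl⟩
    -- basic positional facts
    have hiz : i ≤ z := by
      by_contra h
      exact hileft z (lt_of_not_ge h) hz0
    have hnostar : ∀ j, j < i → S j ≠ Letter.star := fun j hj =>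
      hzl j (lt_of_lt_of_le hj hiz)
    have hip : i < p := by
      obtain ⟨s, hs1⟩ := hs
      have h1s : i ≤ s := by
        by_contra h
        exact hnostar s (lt_of_not_ge h) hs1
      have h2s : s ≤ p := by
        by_contra h
        exact hpr s (lt_of_not_ge h) hs1
      have : i ≠ p := fun h => by rw [h, hp1] at hi0; exact Letter.noConfusion hi0
      omega
    -- counts
    have hc1 := count1_update S i Letter.star
    have hc0 := count0_update S i Letter.star
    have hcs := countStar_update S i Letter.star
    rw [hi0] at hc1 hc0 hcs
    simp only [reduceCtorEq, if_true, if_false, if_pos rfl, Nat.add_zero] at hc1 hc0 hcs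
    have hcS : 1 ≤ countStar S := one_le_countStar hs
    have hface2 : count1 S + 1 ≤ k ∧ k + 1 ≤ count1 S + countStar S := by
      rcases hFS with ⟨h, -⟩ | h
      · omega
      · exact h
    have hipne : p ≠ i := fun h => by rw [← h, hp1] at hi0; exact Letter.noConfusion hi0
    refine ⟨Or.inr ⟨by omega, by omega⟩, ⟨by omega, by omega, ?_, ?_⟩, ?_⟩
    · -- OneRight S'
      refine ⟨⟨i, by simp⟩, p, ?_, ?_⟩
      · rw [Function.update_of_ne hipne]; exact hp1
      · intro q hq
        have : q ≠ i := fun h => by omega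
        rw [Function.update_of_ne this]
        exact hpr q hq
    · -- NoZeroLeft S'
      refine ⟨⟨i, by simp⟩, fun j hj => ?_⟩
      have hjne : j ≠ i := fun h => by rw [h] at hj; simp at hj
      rw [Function.update_of_ne hjne] at hj
      have : ¬ j < i := fun h => hileft j h hj
      exact ⟨i, by omega, by simp⟩
    · -- Apply4 S' S
      refine ⟨i, ⟨by simp, fun j hj => ?_⟩, ?_⟩
      · rw [Function.update_of_ne (show j ≠ i by omega)]
        exact hnostar j hj
      · funext j
        by_cases hj : j = i
        · subst hj; simp [hi0]
        · simp [Function.update_of_ne hj]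
  · rintro T T' hFT ⟨h1, h0, ⟨hs, p, hp1, hpr⟩, ⟨-, hNZ⟩⟩ ⟨i, ⟨hiS, hileft⟩, rfl⟩
    -- counts
    have hc1 := count1_update T i Letter.zero
    have hc0 := count0_update T i Letter.zero
    have hcs := countStar_update T i Letter.zero
    rw [hiS] at hc1 hc0 hcs
    simp only [reduceCtorEq, if_true, if_false, if_pos rfl, Nat.add_zero] at hc1 hc0 hcs
    have htot := cnt_total T
    have hipne : p ≠ i := fun h => by rw [h, hiS] at hp1; exact Letter.noConfusion hp1
    have hstar' : hasStar (Function.update T i Letter.zero) :=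
      hasStar_of_countStar (by omega)
    refine ⟨Or.inr ⟨by omega, by omega⟩, ⟨by omega, by omega, ?_, ?_⟩, ?_⟩
    · -- OneRight T'
      refine ⟨hstar', p, ?_, ?_⟩
      · rw [Function.update_of_ne hipne]; exact hp1
      · intro q hq
        by_cases h : q = i
        · subst h; simp
        · rw [Function.update_of_ne h]; exact hpr q hq
    · -- ZeroLeft T'
      refine ⟨hstar', i, by simp, fun j hj => ?_⟩
      rw [Function.update_of_ne (show j ≠ i by omega)]
      exact hileft j hj
    · -- Apply3 T' T
      refine ⟨i, ⟨by simp, fun j hj => ?_⟩, ?_⟩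
      · rw [Function.update_of_ne (show j ≠ i by omega)]
        intro hz
        obtain ⟨q, hq1, hq2⟩ := hNZ j hz
        exact hileft q (by omega) hq2
      · funext j
        by_cases hj : j = i
        · subst hj; simp [hiS]
        · simp [Function.update_of_ne hj]
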